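/- Let (X, 𝔛, m) be a measure space and let ν₁, ν₂ be probability measures on X with densities G₁ ≥ 0 and G₂ ≥ 0 with respect to m. Suppose A ∈ 𝔛 and k > 0 are such that G₁ = k·G₂ m-almost everywhere on A. Then ∫ |G₁ − G₂| dm ≤ 2(ν₁(X \ A) + ν₂(X \ A)). -/

import Mathlib

open MeasureTheory

/-- If two probability densities G₁, G₂ w.r.t. m are
proportional (G₁ = k·G₂, k > 0) a.e. on a set A, then their L¹ distance is at
most 2(ν₁(Aᶜ) + ν₂(Aᶜ)). -/
theorem L1_dist_le_of_proportional_on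
    {X : Type*} [MeasurableSpace X] (m : Measure X)
    (G₁ G₂ : X → ℝ) (hG₁m : Measurable G₁) (hG₂m : Measurable G₂)
    (hG₁ : ∀ x, 0 ≤ G₁ x) (hG₂ : ∀ x, 0 ≤ G₂ x)
    (ν₁ ν₂ : Measure X)
    (hν₁ : ν₁ = m.withDensity fun x => ENNReal.ofReal (G₁ x))
    (hν₂ : ν₂ = m.withDensity fun x => ENNReal.ofReal (G₂ x))
    [IsProbabilityMeasure ν₁] [IsProbabilityMeasure ν₂]
    (A : Set X) (hA : MeasurableSet A) (c : ℝ) (hc : 0 < c)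
    (hprop : ∀ᵐ x ∂m, x ∈ A → G₁ x = c * G₂ x) :
    ∫⁻ x, ENNReal.ofReal |G₁ x - G₂ x| ∂m ≤ 2 * (ν₁ Aᶜ + ν₂ Aᶜ) := by
  have hν₁A : ν₁ A = ∫⁻ x in A, ENNReal.ofReal (G₁ x) ∂m := by
    rw [hν₁, withDensity_apply _ hA]
  have hν₂A : ν₂ A = ∫⁻ x in A, ENNReal.ofReal (G₂ x) ∂m := by
    rw [hν₂, withDensity_apply _ hA]
  have hν₁Ac : ν₁ Aᶜ = ∫⁻ x in Aᶜ, ENNReal.ofReal (G₁ x) ∂m := by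
    rw [hν₁, withDensity_apply _ hA.compl]
  have hν₂Ac : ν₂ Aᶜ = ∫⁻ x in Aᶜ, ENNReal.ofReal (G₂ x) ∂m := by
    rw [hν₂, withDensity_apply _ hA.compl]
  have hsplit : ∫⁻ x, ENNReal.ofReal |G₁ x - G₂ x| ∂m
      = (∫⁻ x in A, ENNReal.ofReal |G₁ x - G₂ x| ∂m)
        + ∫⁻ x in Aᶜ, ENNReal.ofReal |G₁ x - G₂ x| ∂m :=
    (lintegral_add_compl _ hA).symm
  have hOnA : ∫⁻ x in A, ENNReal.ofReal |G₁ x - G₂ x| ∂m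
      = ENNReal.ofReal |c - 1| * ν₂ A := by
    rw [hν₂A, ← lintegral_const_mul _ hG₂m.ennreal_ofReal]
    refine setLIntegral_congr_fun_ae hA ?_
    filter_upwards [hprop] with x hx hxA
    rw [hx hxA, show c * G₂ x - G₂ x = (c - 1) * G₂ x by ring, abs_mul,
      abs_of_nonneg (hG₂ x), ENNReal.ofReal_mul (abs_nonneg _)]
  have hkey : ν₁ A = ENNReal.ofReal c * ν₂ A := by
    rw [hν₁A, hν₂A, ← lintegral_const_mul _ hG₂m.ennreal_ofReal]
    refine setLIntegral_congr_fun_ae hA ?_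
    filter_upwards [hprop] with x hx hxA
    rw [hx hxA, ENNReal.ofReal_mul hc.le]
  have hOnAc : ∫⁻ x in Aᶜ, ENNReal.ofReal |G₁ x - G₂ x| ∂m ≤ ν₁ Aᶜ + ν₂ Aᶜ := by
    rw [hν₁Ac, hν₂Ac, ← lintegral_add_left hG₁m.ennreal_ofReal]
    refine lintegral_mono fun x => ?_
    rw [← ENNReal.ofReal_add (hG₁ x) (hG₂ x)]
    refine ENNReal.ofReal_le_ofReal ?_
    calc |G₁ x - G₂ x| ≤ |G₁ x| + |G₂ x| := abs_sub _ _
      _ = G₁ x + G₂ x := by rw [abs_of_nonneg (hG₁ x), abs_of_nonneg (hG₂ x)]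
  have hbne : ν₂ A ≠ ⊤ := measure_ne_top _ _
  have hane : ν₁ A ≠ ⊤ := measure_ne_top _ _
  have h1 : ν₁ A + ν₁ Aᶜ = 1 := by
    rw [measure_add_measure_compl hA, measure_univ]
  have h2 : ν₂ A + ν₂ Aᶜ = 1 := by
    rw [measure_add_measure_compl hA, measure_univ]
  have hmid : ENNReal.ofReal |c - 1| * ν₂ A ≤ ν₁ Aᶜ + ν₂ Aᶜ := by
    rcases le_or_gt 1 c with h1c | h1c
    · rw [abs_of_nonneg (by linarith)]
      have heq : ENNReal.ofReal (c - 1) * ν₂ A + ν₂ A = ν₁ A := by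
        calc ENNReal.ofReal (c - 1) * ν₂ A + ν₂ A
            = (ENNReal.ofReal (c - 1) + ENNReal.ofReal 1) * ν₂ A := by
              rw [add_mul, ENNReal.ofReal_one, one_mul]
          _ = ENNReal.ofReal c * ν₂ A := by
              rw [← ENNReal.ofReal_add (by linarith) zero_le_one]; norm_num
          _ = ν₁ A := hkey.symm
      have hle : ENNReal.ofReal (c - 1) * ν₂ A + ν₂ A ≤ ν₂ Aᶜ + ν₂ A := by
        rw [heq]
        calc ν₁ A ≤ 1 := prob_le_one
          _ = ν₂ A + ν₂ Aᶜ := h2.symm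
          _ = ν₂ Aᶜ + ν₂ A := add_comm _ _
      have := (ENNReal.add_le_add_iff_right hbne).mp hle
      exact this.trans (le_add_self)
    · rw [abs_of_nonpos (by linarith), neg_sub]
      have heq : ENNReal.ofReal (1 - c) * ν₂ A + ν₁ A = ν₂ A := by
        calc ENNReal.ofReal (1 - c) * ν₂ A + ν₁ A
            = (ENNReal.ofReal (1 - c) + ENNReal.ofReal c) * ν₂ A := by
              rw [hkey, add_mul]
          _ = ENNReal.ofReal 1 * ν₂ A := by
              rw [← ENNReal.ofReal_add (by linarith) hc.le]; norm_num
          _ = ν₂ A := by rw [ENNReal.ofReal_one, one_mul]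
      have hle : ENNReal.ofReal (1 - c) * ν₂ A + ν₁ A ≤ ν₁ Aᶜ + ν₁ A := by
        rw [heq]
        calc ν₂ A ≤ 1 := prob_le_one
          _ = ν₁ A + ν₁ Aᶜ := h1.symm
          _ = ν₁ Aᶜ + ν₁ A := add_comm _ _
      have := (ENNReal.add_le_add_iff_right hane).mp hle
      exact this.trans (le_self_add)
  calc ∫⁻ x, ENNReal.ofReal |G₁ x - G₂ x| ∂m
      = ENNReal.ofReal |c - 1| * ν₂ A
        + ∫⁻ x in Aᶜ, ENNReal.ofReal |G₁ x - G₂ x| ∂m := by rw [hsplit, hOnA]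
    _ ≤ (ν₁ Aᶜ + ν₂ Aᶜ) + (ν₁ Aᶜ + ν₂ Aᶜ) := add_le_add hmid hOnAc
    _ = 2 * (ν₁ Aᶜ + ν₂ Aᶜ) := (two_mul _).symm
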